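/- Two permutations σ₁ and σ₂ in the symmetric group Σₙ are conjugate if and only if their permutation matrices c_{σ₁} and c_{σ₂} (the n×n matrices with 1 in entry (i, σ(i)) and 0 elsewhere) are similar in M_n(ℂ). -/

import Mathlib

open Equiv Matrix Function

section aux

lemma my_permMatrix_mul {n : ℕ} (σ τ : Equiv.Perm (Fin n)) :
    ((σ * τ).permMatrix ℂ) = τ.permMatrix ℂ * σ.permMatrix ℂ := by
  show ((τ.trans σ).toPEquiv).toMatrix = _
  rw [Equiv.toPEquiv_trans, PEquiv.toMatrix_trans]

lemma my_permMatrix_one {n : ℕ} : ((1 : Equiv.Perm (Fin n)).permMatrix ℂ) = 1 := by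
  show ((Equiv.refl (Fin n)).toPEquiv).toMatrix = 1
  rw [Equiv.toPEquiv_refl, PEquiv.toMatrix_refl]

lemma my_permMatrix_pow {n : ℕ} (σ : Equiv.Perm (Fin n)) (k : ℕ) :
    ((σ ^ k).permMatrix ℂ) = (σ.permMatrix ℂ) ^ k := by
  induction k with
  | zero => simpa using my_permMatrix_one
  | succ k ih => rw [pow_succ, my_permMatrix_mul, ih, pow_succ']

lemma my_filter_dvd_sum_eq (m : ℕ) (hm : m ≠ 0) (M : Multiset ℕ) :
    (M.filter (· ∣ m)).sum = ∑ d ∈ m.divisors, d * M.count d := by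
  induction M using Multiset.induction with
  | empty => simp
  | cons a M ih =>
    have hcnt : ∀ d ∈ m.divisors,
        d * (a ::ₘ M).count d = d * M.count d + (if d = a then d else 0) := by
      intro d _
      rw [Multiset.count_cons]
      rcases eq_or_ne d a with h | h <;> simp [h, mul_add]
    rw [Finset.sum_congr rfl hcnt, Finset.sum_add_distrib, ← ih]
    simp only [Finset.sum_ite_eq']
    by_cases ha : a ∣ m
    · simp [Multiset.filter_cons, ha, Nat.mem_divisors, hm, add_comm]
    · simp [Multiset.filter_cons, ha, Nat.mem_divisors]

lemma my_multiset_eq (M₁ M₂ : Multiset ℕ) (h₁ : ∀ d ∈ M₁, 2 ≤ d) (h₂ : ∀ d ∈ M₂, 2 ≤ d)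
    (h : ∀ k, (M₁.filter (fun d => ¬ d ∣ k)).sum = (M₂.filter (fun d => ¬ d ∣ k)).sum) :
    M₁ = M₂ := by
  have hsum : M₁.sum = M₂.sum := by
    have h1 := h 1
    rw [Multiset.filter_eq_self.2 (fun a ha => by have := h₁ a ha; rw [Nat.dvd_one]; omega),
      Multiset.filter_eq_self.2 (fun a ha => by have := h₂ a ha; rw [Nat.dvd_one]; omega)] at h1
    exact h1
  have hg : ∀ k, (M₁.filter (· ∣ k)).sum = (M₂.filter (· ∣ k)).sum := by
    intro k
    have e1 : (M₁.filter (· ∣ k)).sum + (M₁.filter (fun d => ¬ d ∣ k)).sum = M₁.sum :=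
      Multiset.sum_filter_add_sum_filter_not _
    have e2 : (M₂.filter (· ∣ k)).sum + (M₂.filter (fun d => ¬ d ∣ k)).sum = M₂.sum :=
      Multiset.sum_filter_add_sum_filter_not _
    have hk := h k
    omega
  have key : ∀ m, M₁.count m = M₂.count m := by
    intro m
    induction m using Nat.strong_induction_on with
    | _ m ih =>
      rcases Nat.lt_or_ge m 2 with hm | hm
      · rw [Multiset.count_eq_zero.2 (fun hmem => by have := h₁ m hmem; omega),
          Multiset.count_eq_zero.2 (fun hmem => by have := h₂ m hmem; omega)]
      · have hm0 : m ≠ 0 := by omega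
        have hgm := hg m
        rw [my_filter_dvd_sum_eq m hm0 M₁, my_filter_dvd_sum_eq m hm0 M₂,
          ← Nat.cons_self_properDivisors hm0, Finset.sum_cons, Finset.sum_cons] at hgm
        have hprop : ∑ d ∈ m.properDivisors, d * M₁.count d
            = ∑ d ∈ m.properDivisors, d * M₂.count d :=
          Finset.sum_congr rfl fun d hd => by
            rw [ih d (Nat.mem_properDivisors.1 hd).2]
        have : m * M₁.count m = m * M₂.count m := by omega
        exact Nat.eq_of_mul_eq_mul_left (by omega) this
  exact Multiset.ext.2 key

lemma my_support_pow_card {α : Type*} [Fintype α] [DecidableEq α] (σ : Equiv.Perm α) (k : ℕ) :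
    (σ ^ k).support.card = ((σ.cycleType).filter (fun d => ¬ d ∣ k)).sum := by
  induction σ using Equiv.Perm.cycle_induction_on with
  | base_one => simp
  | base_cycles σ hσ =>
    rw [hσ.cycleType]
    by_cases h : σ.support.card ∣ k
    · have h1 : σ ^ k = 1 := by
        rw [← orderOf_dvd_iff_pow_eq_one, hσ.orderOf]; exact h
      simp [h1, Multiset.filter_singleton, h]
    · rw [hσ.support_pow_eq_iff.2 (by rw [hσ.orderOf]; exact h),
        Multiset.filter_singleton, if_pos h, Multiset.sum_singleton]
  | induction_disjoint σ τ hd hc hσ hτ =>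
    rw [(hd.commute).mul_pow, (hd.pow_disjoint_pow k k).card_support_mul, Equiv.Perm.Disjoint.cycleType_mul hd,
      Multiset.filter_add, Multiset.sum_add, hσ, hτ]

lemma my_ncard_fixedPoints {n : ℕ} (τ : Equiv.Perm (Fin n)) :
    (Function.fixedPoints τ).ncard = n - τ.support.card := by
  classical
  rw [← Nat.card_coe_set_eq, Nat.card_eq_fintype_card]
  rw [Equiv.Perm.card_fixedPoints, Equiv.Perm.sum_cycleType, Fintype.card_fin]

end aux

/-- Two permutations `σ₁ σ₂ ∈ Σₙ` are conjugate if and only if their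
permutation matrices (the `n × n` matrices with `1` in entry `(i, σ i)` and `0` elsewhere)
are similar (i.e. conjugate) in `Mₙ(ℂ)`. -/
theorem perm_isConj_iff_permMatrix_isConj (n : ℕ) (σ₁ σ₂ : Equiv.Perm (Fin n)) :
    IsConj σ₁ σ₂ ↔ IsConj (σ₁.permMatrix ℂ) (σ₂.permMatrix ℂ) := by
  constructor
  · intro h
    obtain ⟨c, hc⟩ := isConj_iff.1 h
    have key : σ₁ * c⁻¹ = c⁻¹ * σ₂ := by
      rw [← hc]; group
    refine ⟨⟨(c⁻¹).permMatrix ℂ, c.permMatrix ℂ, ?_, ?_⟩, ?_⟩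
    · rw [← my_permMatrix_mul, mul_inv_cancel, my_permMatrix_one]
    · rw [← my_permMatrix_mul, inv_mul_cancel, my_permMatrix_one]
    · show (c⁻¹).permMatrix ℂ * σ₁.permMatrix ℂ = σ₂.permMatrix ℂ * (c⁻¹).permMatrix ℂ
      rw [← my_permMatrix_mul, ← my_permMatrix_mul, key]
  · intro h
    rw [Equiv.Perm.isConj_iff_cycleType_eq]
    obtain ⟨u, hu⟩ := h
    have htr : ∀ k : ℕ,
        Matrix.trace ((σ₁ ^ k).permMatrix ℂ) = Matrix.trace ((σ₂ ^ k).permMatrix ℂ) := by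
      intro k
      rw [my_permMatrix_pow, my_permMatrix_pow]
      have hk : (u : Matrix (Fin n) (Fin n) ℂ) * (σ₁.permMatrix ℂ) ^ k
          = (σ₂.permMatrix ℂ) ^ k * u := (hu.pow_right k).eq
      set V : Matrix (Fin n) (Fin n) ℂ := ((u⁻¹ : (Matrix (Fin n) (Fin n) ℂ)ˣ) : Matrix (Fin n) (Fin n) ℂ) with hV
      have hUV : (u : Matrix (Fin n) (Fin n) ℂ) * V = 1 := u.mul_inv
      have hVU : V * (u : Matrix (Fin n) (Fin n) ℂ) = 1 := u.inv_mul
      have h2 : (σ₂.permMatrix ℂ) ^ k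
          = (u : Matrix (Fin n) (Fin n) ℂ) * (σ₁.permMatrix ℂ) ^ k * V := by
        rw [hk, mul_assoc, hUV, mul_one]
      rw [h2, Matrix.trace_mul_comm, ← mul_assoc, hVU, one_mul]
    have hfix : ∀ k : ℕ,
        (Function.fixedPoints (σ₁ ^ k)).ncard = (Function.fixedPoints (σ₂ ^ k)).ncard := by
      intro k
      have := htr k
      rw [Matrix.trace_permutation, Matrix.trace_permutation] at this
      exact_mod_cast this
    have hsupp : ∀ k : ℕ, ((σ₁ ^ k).support.card : ℕ) = (σ₂ ^ k).support.card := by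
      intro k
      have h1 := my_ncard_fixedPoints (σ₁ ^ k)
      have h2 := my_ncard_fixedPoints (σ₂ ^ k)
      have hle1 : (σ₁ ^ k).support.card ≤ n := by
        simpa using Finset.card_le_univ (σ₁ ^ k).support
      have hle2 : (σ₂ ^ k).support.card ≤ n := by
        simpa using Finset.card_le_univ (σ₂ ^ k).support
      have := hfix k
      omega
    refine my_multiset_eq _ _ (fun d hd => Equiv.Perm.two_le_of_mem_cycleType hd)
      (fun d hd => Equiv.Perm.two_le_of_mem_cycleType hd) (fun k => ?_)
    rw [← my_support_pow_card, ← my_support_pow_card]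
    exact hsupp k
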